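/- The Cartan invariant of any triple of pairwise non-proportional null vectors for a Hermitian form of signature (2,1) lies in the closed interval [−π/2, π/2]. -/

import Mathlib

open Matrix Complex

noncomputable section

abbrev C3 := Fin 3 → ℂ

/-- Hermitian form ⟨X,Y⟩ = Yᴴ J X. -/
def herm (J : Matrix (Fin 3) (Fin 3) ℂ) (X Y : C3) : ℂ :=
  star Y ⬝ᵥ J.mulVec X

/-- Box product a ⊠ b = conj(J⁻¹ (a × b)). -/
def box (J : Matrix (Fin 3) (Fin 3) ℂ) (a b : C3) : C3 :=
  star (J⁻¹.mulVec (crossProduct a b))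

def J3 : Matrix (Fin 3) (Fin 3) ℂ := !![1,0,0;0,1,0;0,0,-1]

def HS : Matrix (Fin 3) (Fin 3) ℂ := !![0,0,1;0,2,0;1,0,0]

def cartan (J : Matrix (Fin 3) (Fin 3) ℂ) (p q r : C3) : ℝ :=
  (-(herm J p q * herm J q r * herm J r p)).arg

def heisPt (z : ℂ) (t : ℝ) : C3 := ![(-(Complex.normSq z) : ℝ) + (t : ℂ) * Complex.I, z, 1]

def realVec (v : Fin 3 → ℝ) : C3 := fun i => (v i : ℂ)

/-- Core estimate: if `α.re = -nu/2`, `β.re = -nv/2`, `normSq γ ≤ nu * nv`, then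
the real part of `-((γ + α + conj β) * β * conj α)` is nonnegative. -/
lemma core (α β γ : ℂ) (nu nv : ℝ) (hnu : 0 ≤ nu) (hnv : 0 ≤ nv)
    (hα : α.re = -(nu/2)) (hβ : β.re = -(nv/2)) (hγ : Complex.normSq γ ≤ nu * nv) :
    0 ≤ (-((γ + α + (starRingEnd ℂ) β) * β * (starRingEnd ℂ) α)).re := by
  have h1 : α * (starRingEnd ℂ) α = (Complex.normSq α : ℂ) := Complex.mul_conj α
  have h2 : (starRingEnd ℂ) β * β = (Complex.normSq β : ℂ) := by rw [mul_comm]; exact Complex.mul_conj β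
  have expand : (-((γ + α + (starRingEnd ℂ) β) * β * (starRingEnd ℂ) α))
      = -(γ * β * (starRingEnd ℂ) α) - (Complex.normSq α : ℂ) * β
        - (Complex.normSq β : ℂ) * (starRingEnd ℂ) α := by
    linear_combination (-β) * h1 + (-(starRingEnd ℂ) α) * h2
  rw [expand]
  simp only [Complex.sub_re, Complex.neg_re, Complex.re_ofReal_mul, Complex.conj_re, hα, hβ]
  have hR : (γ * β * (starRingEnd ℂ) α).re ≤ ‖γ‖ * ‖β‖ * ‖α‖ := by
    calc (γ * β * (starRingEnd ℂ) α).re ≤ ‖γ * β * (starRingEnd ℂ) α‖ :=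
          Complex.re_le_norm _
      _ = ‖γ‖ * ‖β‖ * ‖α‖ := by simp [_root_.map_mul]
  set g := ‖γ‖ with hg
  set a' := ‖α‖ with ha'
  set b' := ‖β‖ with hb'
  set su := Real.sqrt nu with hsu
  set sv := Real.sqrt nv with hsv
  have hsu2 : su ^ 2 = nu := Real.sq_sqrt hnu
  have hsv2 : sv ^ 2 = nv := Real.sq_sqrt hnv
  have hgsq : g ^ 2 ≤ nu * nv := by
    rw [hg, Complex.sq_norm]; exact hγ
  have hgle : g ≤ su * sv := by
    have h0 : g = Real.sqrt (g ^ 2) := (Real.sqrt_sq (norm_nonneg _)).symm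
    rw [h0, hsu, hsv, ← Real.sqrt_mul hnu]
    exact Real.sqrt_le_sqrt hgsq
  have ha2 : Complex.normSq α = a' ^ 2 := (Complex.sq_norm α).symm
  have hb2 : Complex.normSq β = b' ^ 2 := (Complex.sq_norm β).symm
  rw [ha2, hb2]
  have h1' : 0 ≤ a' := norm_nonneg _
  have h2' : 0 ≤ b' := norm_nonneg _
  have h3' : 0 ≤ su := Real.sqrt_nonneg _
  have h4' : 0 ≤ sv := Real.sqrt_nonneg _
  nlinarith [sq_nonneg (a' * sv - b' * su), mul_nonneg (mul_nonneg h1' h2') (sub_nonneg.2 hgle),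
    hR, mul_nonneg h3' h4']


set_option maxHeartbeats 1000000 in
lemma key (a1 a2 b1 b2 c1 c2 : ℂ)
    (ha : a1 * (starRingEnd ℂ) a1 + a2 * (starRingEnd ℂ) a2 = 1)
    (hb : b1 * (starRingEnd ℂ) b1 + b2 * (starRingEnd ℂ) b2 = 1)
    (hc : c1 * (starRingEnd ℂ) c1 + c2 * (starRingEnd ℂ) c2 = 1) :
    0 ≤ ((1 - (a1 * (starRingEnd ℂ) b1 + a2 * (starRingEnd ℂ) b2)) *
        (1 - (b1 * (starRingEnd ℂ) c1 + b2 * (starRingEnd ℂ) c2)) *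
        (1 - (c1 * (starRingEnd ℂ) a1 + c2 * (starRingEnd ℂ) a2))).re := by
  set u1 := a1 - c1 with hu1
  set u2 := a2 - c2 with hu2
  set v1 := b1 - c1 with hv1
  set v2 := b2 - c2 with hv2
  set α := u1 * (starRingEnd ℂ) c1 + u2 * (starRingEnd ℂ) c2 with hα
  set β := v1 * (starRingEnd ℂ) c1 + v2 * (starRingEnd ℂ) c2 with hβ
  set γ := u1 * (starRingEnd ℂ) v1 + u2 * (starRingEnd ℂ) v2 with hγ
  have hX : 1 - (a1 * (starRingEnd ℂ) b1 + a2 * (starRingEnd ℂ) b2)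
      = -(γ + α + (starRingEnd ℂ) β) := by
    simp only [hα, hβ, hγ, hu1, hu2, hv1, hv2, map_add, _root_.map_mul, _root_.map_sub,
      Complex.conj_conj]
    linear_combination (-1 : ℂ) * hc
  have hY : 1 - (b1 * (starRingEnd ℂ) c1 + b2 * (starRingEnd ℂ) c2) = -β := by
    simp only [hβ, hv1, hv2]
    linear_combination (-1 : ℂ) * hc
  have hZ : 1 - (c1 * (starRingEnd ℂ) a1 + c2 * (starRingEnd ℂ) a2)
      = -((starRingEnd ℂ) α) := by
    simp only [hα, hu1, hu2, map_add, _root_.map_mul, _root_.map_sub, Complex.conj_conj]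
    linear_combination (-1 : ℂ) * hc
  rw [hX, hY, hZ]
  have hre : (-(γ + α + (starRingEnd ℂ) β) * -β * -((starRingEnd ℂ) α))
      = (-((γ + α + (starRingEnd ℂ) β) * β * (starRingEnd ℂ) α)) := by ring
  rw [hre]
  -- real part of α
  have h1 : α + (starRingEnd ℂ) α = -(((Complex.normSq u1 + Complex.normSq u2 : ℝ)) : ℂ) := by
    push_cast
    simp only [← Complex.mul_conj]
    simp only [hα, hu1, hu2, map_add, _root_.map_mul, _root_.map_sub, Complex.conj_conj]
    linear_combination ha - hc
  have h2 : β + (starRingEnd ℂ) β = -(((Complex.normSq v1 + Complex.normSq v2 : ℝ)) : ℂ) := by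
    push_cast
    simp only [← Complex.mul_conj]
    simp only [hβ, hv1, hv2, map_add, _root_.map_mul, _root_.map_sub, Complex.conj_conj]
    linear_combination hb - hc
  have hαre : α.re = -((Complex.normSq u1 + Complex.normSq u2)/2) := by
    have := congrArg Complex.re h1
    simp only [Complex.add_re, Complex.conj_re, Complex.neg_re, Complex.ofReal_re,
      Complex.ofReal_add] at this
    linarith
  have hβre : β.re = -((Complex.normSq v1 + Complex.normSq v2)/2) := by
    have := congrArg Complex.re h2
    simp only [Complex.add_re, Complex.conj_re, Complex.neg_re, Complex.ofReal_re,
      Complex.ofReal_add] at this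
    linarith
  -- Lagrange identity / Cauchy-Schwarz
  have lagC : ((Complex.normSq γ + Complex.normSq (u1 * v2 - u2 * v1) : ℝ) : ℂ)
      = (((Complex.normSq u1 + Complex.normSq u2) * (Complex.normSq v1 + Complex.normSq v2) : ℝ) : ℂ) := by
    push_cast
    simp only [← Complex.mul_conj]
    simp only [hγ, hu1, hu2, hv1, hv2, map_add, _root_.map_mul, _root_.map_sub, Complex.conj_conj]
    ring
  have lagR := Complex.ofReal_inj.mp lagC
  have hγle : Complex.normSq γ ≤ (Complex.normSq u1 + Complex.normSq u2) * (Complex.normSq v1 + Complex.normSq v2) := by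
    nlinarith [Complex.normSq_nonneg (u1 * v2 - u2 * v1)]
  exact core α β γ _ _ (add_nonneg (Complex.normSq_nonneg _) (Complex.normSq_nonneg _)) (add_nonneg (Complex.normSq_nonneg _) (Complex.normSq_nonneg _)) hαre hβre hγle


lemma hermEq (p q : C3) : herm J3 p q =
    (starRingEnd ℂ) (q 0) * p 0 + (starRingEnd ℂ) (q 1) * p 1 - (starRingEnd ℂ) (q 2) * p 2 := by
  simp [herm, J3, dotProduct, Matrix.mulVec, Fin.sum_univ_three, Pi.star_apply,
    Matrix.vecHead, Matrix.vecTail]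
  ring

lemma third_ne (p : C3) (hp : p ≠ 0)
    (hpp : herm J3 p p = 0) : p 2 ≠ 0 := by
  intro h2
  rw [hermEq] at hpp
  rw [h2, mul_zero, sub_zero] at hpp
  have h0 : Complex.normSq (p 0) + Complex.normSq (p 1) = 0 := by
    have := congrArg Complex.re hpp
    simpa [Complex.add_re, ← Complex.normSq_eq_conj_mul_self] using this
  have hp0 : p 0 = 0 := by
    have := Complex.normSq_nonneg (p 0); have := Complex.normSq_nonneg (p 1)
    have : Complex.normSq (p 0) = 0 := by linarith
    exact Complex.normSq_eq_zero.mp this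
  have hp1 : p 1 = 0 := by
    have := Complex.normSq_nonneg (p 0); have := Complex.normSq_nonneg (p 1)
    have : Complex.normSq (p 1) = 0 := by linarith
    exact Complex.normSq_eq_zero.mp this
  apply hp
  funext i
  fin_cases i <;> simpa [hp0, hp1, h2]


/-- The Cartan invariant of a triple of pairwise non-proportional null vectors lies in
[−π/2, π/2]; equivalently the real part of −⟨p,q⟩⟨q,r⟩⟨r,p⟩ is nonnegative. -/
theorem stmt6 (p q r : C3) (hp : p ≠ 0) (hq : q ≠ 0) (hr : r ≠ 0)
    (hpp : herm J3 p p = 0) (hqq : herm J3 q q = 0) (hrr : herm J3 r r = 0)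
    (hpq : ¬ ∃ l : ℂ, q = l • p) (hqr : ¬ ∃ l : ℂ, r = l • q) (hrp : ¬ ∃ l : ℂ, p = l • r) :
    0 ≤ (-(herm J3 p q * herm J3 q r * herm J3 r p)).re ∧
      cartan J3 p q r ∈ Set.Icc (-(Real.pi / 2)) (Real.pi / 2) := by
  have hp2 : p 2 ≠ 0 := third_ne p hp hpp
  have hq2 : q 2 ≠ 0 := third_ne q hq hqq
  have hr2 : r 2 ≠ 0 := third_ne r hr hrr
  have hp2' : (starRingEnd ℂ) (p 2) ≠ 0 := by simpa using hp2
  have hq2' : (starRingEnd ℂ) (q 2) ≠ 0 := by simpa using hq2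
  have hr2' : (starRingEnd ℂ) (r 2) ≠ 0 := by simpa using hr2
  rw [hermEq] at hpp hqq hrr
  -- normalized vectors
  set a1 := p 0 / p 2 with ha1
  set a2 := p 1 / p 2 with ha2
  set b1 := q 0 / q 2 with hb1
  set b2 := q 1 / q 2 with hb2
  set c1 := r 0 / r 2 with hc1
  set c2 := r 1 / r 2 with hc2
  have ha : a1 * (starRingEnd ℂ) a1 + a2 * (starRingEnd ℂ) a2 = 1 := by
    simp only [ha1, ha2, map_div₀]
    field_simp
    linear_combination hpp
  have hb : b1 * (starRingEnd ℂ) b1 + b2 * (starRingEnd ℂ) b2 = 1 := by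
    simp only [hb1, hb2, map_div₀]
    field_simp
    linear_combination hqq
  have hc : c1 * (starRingEnd ℂ) c1 + c2 * (starRingEnd ℂ) c2 = 1 := by
    simp only [hc1, hc2, map_div₀]
    field_simp
    linear_combination hrr
  have hkey := key a1 a2 b1 b2 c1 c2 ha hb hc
  have hfact : -(herm J3 p q * herm J3 q r * herm J3 r p)
      = ((Complex.normSq (p 2) * Complex.normSq (q 2) * Complex.normSq (r 2) : ℝ) : ℂ) *
        ((1 - (a1 * (starRingEnd ℂ) b1 + a2 * (starRingEnd ℂ) b2)) *
        (1 - (b1 * (starRingEnd ℂ) c1 + b2 * (starRingEnd ℂ) c2)) *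
        (1 - (c1 * (starRingEnd ℂ) a1 + c2 * (starRingEnd ℂ) a2))) := by
    rw [hermEq, hermEq, hermEq]
    push_cast
    simp only [← Complex.mul_conj]
    simp only [ha1, ha2, hb1, hb2, hc1, hc2, map_div₀]
    field_simp
    ring
  have hre : 0 ≤ (-(herm J3 p q * herm J3 q r * herm J3 r p)).re := by
    rw [hfact, Complex.re_ofReal_mul]
    have hpos : (0:ℝ) ≤ Complex.normSq (p 2) * Complex.normSq (q 2) * Complex.normSq (r 2) := by
      exact mul_nonneg (mul_nonneg (Complex.normSq_nonneg _) (Complex.normSq_nonneg _)) (Complex.normSq_nonneg _)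
    exact mul_nonneg hpos hkey
  refine ⟨hre, ?_⟩
  have harg : |(-(herm J3 p q * herm J3 q r * herm J3 r p)).arg| ≤ Real.pi / 2 :=
    Complex.abs_arg_le_pi_div_two_iff.mpr hre
  rw [Set.mem_Icc]
  unfold cartan
  constructor
  · linarith [neg_abs_le (-(herm J3 p q * herm J3 q r * herm J3 r p)).arg, harg]
  · linarith [le_abs_self (-(herm J3 p q * herm J3 q r * herm J3 r p)).arg, harg]
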